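/- arXiv:1305.3373 — 2 statements merged into one kernel-verified Lean document; each statement's English description precedes it below -/
import Mathlib

section
/- Every sequence s in P in which the entry 1 occurs at least three times admits a unique decomposition s = 1A1B1 with (1A1) ∈ T and (1B1) ∈ P, where T ⊂ P is the subset of sequences in which 1 occurs exactly twice. -/
/-- Admissible sequences: starting and ending with `1`, containing `1` at least
twice, with the entries greater than `1` pairwise distinct and appearing in
increasing order. -/
def memP (l : List ℕ) : Prop :=
  l.head? = some 1 ∧ l.getLast? = some 1 ∧ 2 ≤ l.count 1 ∧
  (l.filter (fun x => decide (1 < x))).Chain' (· < ·)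

/-- The "connected" admissible sequences, in which `1` occurs exactly twice
(only at the two endpoints). -/
def memT (l : List ℕ) : Prop := memP l ∧ l.count 1 = 2

private lemma cancel_aux (A : List ℕ) : ∀ (A' X Y : List ℕ), 1 ∉ A → 1 ∉ A' →
    A ++ 1 :: X = A' ++ 1 :: Y → A = A' ∧ X = Y := by
  induction A with
  | nil =>
    intro A' X Y _ hA' h
    cases A' with
    | nil => simpa using h
    | cons a t =>
      simp only [List.nil_append, List.cons_append, List.cons.injEq] at h
      exact absurd (h.1 ▸ (List.mem_cons_self : a ∈ a :: t)) (h.1 ▸ hA')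
  | cons a A ih =>
    intro A' X Y hA hA' h
    cases A' with
    | nil =>
      simp only [List.cons_append, List.nil_append, List.cons.injEq] at h
      exact absurd (h.1 ▸ (List.mem_cons_self : a ∈ a :: A)) (h.1 ▸ hA)
    | cons a' t =>
      simp only [List.cons_append, List.cons.injEq] at h
      obtain ⟨rfl, h2⟩ := h
      obtain ⟨rfl, rfl⟩ := ih t X Y (fun hm => hA (List.mem_cons_of_mem _ hm))
        (fun hm => hA' (List.mem_cons_of_mem _ hm)) h2
      exact ⟨rfl, rfl⟩

/-- every admissible sequence `s ∈ P` in which `1` occurs at least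
three times admits a unique decomposition `s = 1A1B1` with `(1A1) ∈ T` and
`(1B1) ∈ P`. -/
theorem unique_connected_decomposition (l : List ℕ) (hl : memP l)
    (h3 : 3 ≤ l.count 1) :
    ∃! p : List ℕ × List ℕ,
      l = 1 :: p.1 ++ 1 :: p.2 ++ [1]
        ∧ memT (1 :: p.1 ++ [1]) ∧ memP (1 :: p.2 ++ [1]) := by
  obtain ⟨hhead, hlast, hcount, hchain⟩ := hl
  -- l = 1 :: t
  cases l with
  | nil => simp at hhead
  | cons a t =>
  have ha : a = 1 := by simpa using hhead
  subst ha
  have hct : 2 ≤ t.count 1 := by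
    have : (1 :: t).count 1 = t.count 1 + 1 := by simp
    omega
  have h1t : 1 ∈ t := List.count_pos_iff.mp (by omega)
  set p := fun x : ℕ => decide (x ≠ 1) with hp
  have hdne : t.dropWhile p ≠ [] := by
    intro h
    have := List.dropWhile_eq_nil_iff.mp h 1 h1t
    simp [hp] at this
  have hhd : (t.dropWhile p).head hdne = 1 := by
    have := List.head_dropWhile_not p hdne
    simpa [hp] using this
  set A := t.takeWhile p with hA
  set r := (t.dropWhile p).tail with hr
  have htdec : t = A ++ 1 :: r := by
    rw [hA, hr, ← hhd, List.cons_head_tail hdne, List.takeWhile_append_dropWhile]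
  have hAno1 : 1 ∉ A := by
    intro hm
    have := List.mem_takeWhile_imp hm
    simp [hp] at this
  have hcA : A.count 1 = 0 := List.count_eq_zero.mpr hAno1
  have hcr : 1 ≤ r.count 1 := by
    have : t.count 1 = A.count 1 + (1 :: r).count 1 := by
      rw [htdec]; simp [List.count_append]
    simp [hcA, List.count_cons] at this
    omega
  have hrne : r ≠ [] := by
    intro h; rw [h] at hcr; simp at hcr
  set B := r.dropLast with hB
  set b := r.getLast hrne with hb
  have hrdec : r = B ++ [b] := (List.dropLast_append_getLast hrne).symm
  have hb1 : b = 1 := by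
    have h1 : (1 :: t).getLast? = some b := by
      rw [htdec, hrdec]
      have : (1 : ℕ) :: (A ++ 1 :: (B ++ [b])) = ((1 :: A ++ 1 :: B) ++ [b]) := by
        simp
      rw [this, List.getLast?_concat]
    rw [hlast] at h1
    exact (Option.some_injective _ h1).symm
  rw [hb1] at hrdec
  have hldec : (1 : ℕ) :: t = 1 :: A ++ 1 :: B ++ [1] := by
    rw [htdec, hrdec]; simp
  -- count facts
  have hcl : (1 :: t).count 1 = 3 + B.count 1 := by
    rw [hldec]; simp [List.count_append, List.count_cons, hcA]; ring
  -- filter facts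
  set q := fun x : ℕ => decide (1 < x) with hq
  have hfA : (1 :: A ++ [1]).filter q = A.filter q := by
    simp [List.filter_append, hq]
  have hfB : (1 :: B ++ [1]).filter q = B.filter q := by
    simp [List.filter_append, hq]
  have hsubA : List.Sublist A (1 :: t) := by
    rw [hldec]
    refine List.Sublist.trans ?_ (List.sublist_append_left _ [1])
    refine List.Sublist.trans ?_ (List.sublist_append_left (1 :: A) (1 :: B))
    exact List.sublist_cons_self 1 A
  have hsubB : List.Sublist B (1 :: t) := by
    rw [hldec]
    refine List.Sublist.trans ?_ (List.sublist_append_left _ [1])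
    refine List.Sublist.trans ?_ (List.sublist_append_right (1 :: A) (1 :: B))
    exact List.sublist_cons_self 1 B
  have hchA : ((1 :: A ++ [1]).filter q).Chain' (· < ·) := by
    rw [hfA]; exact hchain.sublist (hsubA.filter q)
  have hchB : ((1 :: B ++ [1]).filter q).Chain' (· < ·) := by
    rw [hfB]; exact hchain.sublist (hsubB.filter q)
  have hlastA : ((1 : ℕ) :: A ++ [1]).getLast? = some 1 := by
    rw [show (1 : ℕ) :: A ++ [1] = (1 :: A) ++ [1] by simp, List.getLast?_concat]
  have hlastB : ((1 : ℕ) :: B ++ [1]).getLast? = some 1 := by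
    rw [show (1 : ℕ) :: B ++ [1] = (1 :: B) ++ [1] by simp, List.getLast?_concat]
  have hcntA : ((1 : ℕ) :: A ++ [1]).count 1 = 2 := by
    simp [List.count_append, List.count_cons, hcA]
  have hcntB : 2 ≤ ((1 : ℕ) :: B ++ [1]).count 1 := by
    simp [List.count_append, List.count_cons]
  refine ⟨(A, B), ⟨hldec, ⟨⟨by simp, hlastA, hcntA.ge, hchA⟩, hcntA⟩,
    ⟨by simp, hlastB, hcntB, hchB⟩⟩, ?_⟩
  rintro ⟨A', B'⟩ ⟨hdec', ⟨⟨_, _, _, _⟩, hcntA'⟩, _⟩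
  have hcA' : A'.count 1 = 0 := by
    simp [List.count_append, List.count_cons] at hcntA'
    omega
  have hA'no1 : 1 ∉ A' := List.count_eq_zero.mp hcA'
  have heq : A' ++ 1 :: (B' ++ [1]) = A ++ 1 :: (B ++ [1]) := by
    have := hdec'.symm.trans hldec
    simpa using this
  obtain ⟨h1, h2⟩ := cancel_aux A' (A) (B' ++ [1]) (B ++ [1]) hA'no1 hAno1 heq
  have hBB : B' = B := by simpa using h2
  simp [Prod.ext_iff, h1, hBB]
end

section
/- In the setting of Theorem 5, for A = {1^{×n}, 2^{×m}} with n, m ≥ 2, any sequence s ∈ S_{1,1}(A') followed by gluing with a [2C2]-path via the identity [1B1]_φ[2C2]_φ = [1B12C2]_φ/φ₁₂ establishes: the number of sequences in S_{1,2}(A) equals the number of pairs ((1B1),(2C2)) of paths with the stated constraints plus paths (1B1) with A = {1,1,2,B}, i.e. the gluing map [1B1]·[2C2] ↦ [1B12C2]/φ₁₂ and [1B1] ↦ [1B12]/φ₁₂ is a weight-preserving bijection onto paths from 1 to 2. -/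
/-- The weight `[s]_φ` of a sequence of indices. -/
def seqWeight (φ : ℂ → ℂ) (θ : ℕ → ℂ) : List ℕ → ℂ
  | [] => 1
  | [_] => 1
  | a :: b :: rest => φ (θ a - θ b) * seqWeight φ θ (b :: rest)

/-- The gluing map: a pair `(B, C)` is sent to the path `1B12C2`, a single
list `B` is sent to the path `1B12`. -/
def glue : List ℕ × List ℕ ⊕ List ℕ → List ℕ
  | .inl (B, C) => 1 :: B ++ [1] ++ 2 :: C ++ [2]
  | .inr B => 1 :: B ++ [1, 2]

/-- Domain of the gluing map for the multiset `A`: pairs `((1B1),(2C2))` with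
`C` consisting only of `2`'s and total content `A`, together with single paths
`(1B1)` with `A = {1,1,2,B}`. -/
def glueDom (A : Multiset ℕ) : Set (List ℕ × List ℕ ⊕ List ℕ) :=
  {x | match x with
    | .inl (B, C) => ((1 :: B ++ [1] ++ 2 :: C ++ [2] : List ℕ) : Multiset ℕ) = A ∧ ∀ y ∈ C, y = 2
    | .inr B => ((1 :: B ++ [1, 2] : List ℕ) : Multiset ℕ) = A}

/-- `S_{1,2}(A)`: sequences with content `A`, starting with `1`, ending with `2`. -/
def S12set (A : Multiset ℕ) : Set (List ℕ) :=
  {l | (↑l : Multiset ℕ) = A ∧ l.head? = some 1 ∧ l.getLast? = some 2}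

lemma seqWeight_split (φ : ℂ → ℂ) (θ : ℕ → ℂ) (l₁ : List ℕ) (a : ℕ) (l₂ : List ℕ) :
    seqWeight φ θ (l₁ ++ a :: l₂) = seqWeight φ θ (l₁ ++ [a]) * seqWeight φ θ (a :: l₂) := by
  induction l₁ with
  | nil => simp [seqWeight]
  | cons x l₁ ih =>
    cases l₁ with
    | nil => simp [seqWeight]
    | cons y l₁ =>
      simp only [List.cons_append, seqWeight, List.append_eq] at ih ⊢
      rw [ih, mul_assoc]

lemma tw_dw (p : ℕ → Bool) (xs ys : List ℕ) (a : ℕ) (h : ∀ x ∈ xs, p x = true)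
    (ha : p a = false) :
    (xs ++ a :: ys).takeWhile p = xs ∧ (xs ++ a :: ys).dropWhile p = a :: ys := by
  induction xs with
  | nil => simp [List.takeWhile_cons, List.dropWhile_cons, ha]
  | cons x xs ih =>
    have hx : p x = true := h x (by simp)
    have := ih (fun z hz => h z (by simp [hz]))
    simp [List.takeWhile_cons, List.dropWhile_cons, hx, this.1, this.2]

/-- inverse of glue -/
def unglue (l : List ℕ) : List ℕ × List ℕ ⊕ List ℕ :=
  match (l.reverse.takeWhile (· ≠ 1)).reverse with
  | _ :: c :: C' => .inl ((l.reverse.dropWhile (· ≠ 1)).reverse.tail.dropLast, (c :: C').dropLast)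
  | _ => .inr (l.reverse.dropWhile (· ≠ 1)).reverse.tail.dropLast

lemma unglue_glue_inl (B C : List ℕ) (hC : ∀ y ∈ C, y = 2) :
    unglue (glue (.inl (B, C))) = .inl (B, C) := by
  have hr : (glue (.inl (B, C))).reverse
      = (2 :: (C.reverse ++ [2])) ++ 1 :: (B.reverse ++ [1]) := by
    simp [glue]
  have hall : ∀ x ∈ 2 :: (C.reverse ++ [2]), (decide (x ≠ 1)) = true := by
    intro x hx
    have hx2 : x = 2 := by
      rcases List.mem_cons.1 hx with rfl | hx
      · rfl
      rcases List.mem_append.1 hx with hx | hx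
      · exact hC x (List.mem_reverse.1 hx)
      · simpa using hx
    simp [hx2]
  obtain ⟨htw, hdw⟩ := tw_dw (fun x => decide (x ≠ 1)) _ (B.reverse ++ [1]) 1 hall (by simp)
  rw [unglue, hr, htw, hdw,
    show ((2 :: (C.reverse ++ [2])).reverse : List ℕ) = 2 :: (C ++ [2]) by simp,
    show ((1 :: (B.reverse ++ [1])).reverse : List ℕ) = 1 :: (B ++ [1]) by simp]
  cases C with
  | nil => simp [List.dropLast_concat]
  | cons c C =>
    simp only [List.cons_append, List.dropLast_concat, Sum.inl.injEq, Prod.mk.injEq, true_and]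
    constructor
    · exact List.dropLast_concat
    · rw [show c :: (C ++ [2]) = (c :: C) ++ [2] by simp, List.dropLast_concat]

lemma unglue_glue_inr (B : List ℕ) : unglue (glue (.inr B)) = .inr B := by
  have hr : (glue (.inr B)).reverse = ([2] : List ℕ) ++ 1 :: (B.reverse ++ [1]) := by
    simp [glue]
  obtain ⟨htw, hdw⟩ := tw_dw (fun x => decide (x ≠ 1)) [2] (B.reverse ++ [1]) 1 (by simp) (by simp)
  rw [unglue, hr, htw, hdw,
    show ((1 :: (B.reverse ++ [1])).reverse : List ℕ) = 1 :: (B ++ [1]) by simp]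
  simp [List.dropLast_concat]

lemma decomp (l : List ℕ) (h1 : l.head? = some 1) (h2 : l.getLast? = some 2)
    (hmem : ∀ x ∈ l, x = 1 ∨ x = 2) (hcount : 2 ≤ l.count 1) :
    (∃ B C, l = 1 :: B ++ [1] ++ 2 :: C ++ [2] ∧ ∀ y ∈ C, y = 2) ∨
    (∃ B, l = 1 :: B ++ [1, 2]) := by
  have h1r : (1 : ℕ) ∈ l.reverse := by
    rw [List.mem_reverse]
    exact List.count_pos_iff.1 (by omega)
  have hdw_ne : l.reverse.dropWhile (fun x => decide (x ≠ 1)) ≠ [] := by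
    intro h
    have := List.dropWhile_eq_nil_iff.1 h 1 h1r
    simp at this
  obtain ⟨q, hq⟩ : ∃ q, l.reverse.dropWhile (fun x => decide (x ≠ 1)) = 1 :: q := by
    have hhead := List.head_dropWhile_not (fun x => decide (x ≠ 1)) hdw_ne
    cases hdw : l.reverse.dropWhile (fun x => decide (x ≠ 1)) with
    | nil => exact absurd hdw hdw_ne
    | cons a q =>
      refine ⟨q, ?_⟩
      have hh : (List.dropWhile (fun x => decide (x ≠ 1)) l.reverse).head? = some a := by
        rw [hdw]
        rfl
      have hh2 := List.head?_eq_head hdw_ne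
      rw [hh2] at hh
      have ha : a = 1 := by
        have := hhead
        rw [Option.some.injEq] at hh
        rw [hh] at this
        simpa using this
      rw [ha]
  set D := (l.reverse.takeWhile (fun x => decide (x ≠ 1))).reverse with hD
  have hsplit : l = q.reverse ++ 1 :: D := by
    have : l.reverse.takeWhile (fun x => decide (x ≠ 1)) ++ l.reverse.dropWhile (fun x => decide (x ≠ 1)) = l.reverse :=
      List.takeWhile_append_dropWhile
    rw [hq] at this
    calc l = l.reverse.reverse := by simp
    _ = (l.reverse.takeWhile (fun x => decide (x ≠ 1)) ++ 1 :: q).reverse := by rw [this]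
    _ = q.reverse ++ 1 :: D := by simp [hD]
  have hD1 : ∀ x ∈ D, x ≠ 1 := by
    intro x hx
    have := List.mem_takeWhile_imp (List.mem_reverse.1 (hD ▸ hx))
    simpa using this
  have hD2 : ∀ x ∈ D, x = 2 := by
    intro x hx
    rcases hmem x (by rw [hsplit]; simp [hx]) with h | h
    · exact absurd h (hD1 x hx)
    · exact h
  have hqne : q.reverse ≠ [] := by
    intro h
    rw [h, List.nil_append] at hsplit
    have : l.count 1 = 1 := by
      rw [hsplit, List.count_cons_self, List.count_eq_zero.2 (fun h => (hD1 1 h) rfl)]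
    omega
  obtain ⟨P, hP⟩ : ∃ P, q.reverse = 1 :: P := by
    cases hqr : q.reverse with
    | nil => exact absurd hqr hqne
    | cons p P =>
      refine ⟨P, ?_⟩
      have hp : l.head? = some p := by rw [hsplit, hqr]; simp
      rw [h1] at hp
      rw [(Option.some.inj hp).symm]
  rw [hP] at hsplit
  have hDne : D ≠ [] := by
    intro h
    rw [h] at hsplit
    have : l.getLast? = some 1 := by
      rw [hsplit, show (1 :: P ++ [1] : List ℕ) = (1 :: P) ++ [1] by simp,
        List.getLast?_concat]
    rw [h2] at this
    simp at this
  have hDlast : D.getLast hDne = 2 := hD2 _ (List.getLast_mem hDne)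
  have hDeq : D = D.dropLast ++ [2] := by
    conv_lhs => rw [← List.dropLast_append_getLast hDne]
    rw [hDlast]
  cases hC : D.dropLast with
  | nil =>
    right
    refine ⟨P, ?_⟩
    rw [hsplit, hDeq, hC]
    simp
  | cons c C =>
    left
    have hc : c = 2 := hD2 c (by rw [hDeq, hC]; simp)
    refine ⟨P, C, ?_, fun y hy => hD2 y (by rw [hDeq, hC]; simp [hy])⟩
    rw [hsplit, hDeq, hC, hc]
    simp

/-- for `A = {1^{×n}, 2^{×m}}` with `n, m ≥ 2` and `φ₁₂ ≠ 0`,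
the identities `[1B1]_φ[2C2]_φ = [1B12C2]_φ/φ₁₂` and `[1B1]_φ = [1B12]_φ/φ₁₂`
hold, and the gluing map `[1B1]·[2C2] ↦ [1B12C2]/φ₁₂`, `[1B1] ↦ [1B12]/φ₁₂`
is a weight-preserving bijection onto the paths from `1` to `2`. -/
theorem gluing_bijection_two_rapidities (φ : ℂ → ℂ) (θ : ℕ → ℂ)
    (hφ : φ (θ 1 - θ 2) ≠ 0) :
    (∀ B C : List ℕ,
      seqWeight φ θ (1 :: B ++ [1]) * seqWeight φ θ (2 :: C ++ [2])
          = seqWeight φ θ (1 :: B ++ [1] ++ 2 :: C ++ [2]) / φ (θ 1 - θ 2)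
      ∧ seqWeight φ θ (1 :: B ++ [1])
          = seqWeight φ θ (1 :: B ++ [1, 2]) / φ (θ 1 - θ 2))
    ∧ ∀ n m : ℕ, 2 ≤ n → 2 ≤ m →
        (Set.BijOn glue
            (glueDom (Multiset.replicate n 1 + Multiset.replicate m 2))
            (S12set (Multiset.replicate n 1 + Multiset.replicate m 2))
        ∧ ∀ x ∈ glueDom (Multiset.replicate n 1 + Multiset.replicate m 2),
            seqWeight φ θ (glue x)
              = φ (θ 1 - θ 2) *
                (match x with
                  | .inl (B, C) =>
                      seqWeight φ θ (1 :: B ++ [1]) * seqWeight φ θ (2 :: C ++ [2])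
                  | .inr B => seqWeight φ θ (1 :: B ++ [1]))) := by
  have key1 : ∀ B C : List ℕ,
      seqWeight φ θ (1 :: B ++ [1] ++ 2 :: C ++ [2])
        = φ (θ 1 - θ 2) * (seqWeight φ θ (1 :: B ++ [1]) * seqWeight φ θ (2 :: C ++ [2])) := by
    intro B C
    rw [show (1 :: B ++ [1] ++ 2 :: C ++ [2] : List ℕ) = (1 :: B) ++ 1 :: (2 :: (C ++ [2])) by
      simp, seqWeight_split,
      show seqWeight φ θ (1 :: 2 :: (C ++ [2])) = φ (θ 1 - θ 2) * seqWeight φ θ (2 :: C ++ [2])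
        by simp [seqWeight]]
    simp only [List.cons_append]
    ring
  have key2 : ∀ B : List ℕ,
      seqWeight φ θ (1 :: B ++ [1, 2]) = φ (θ 1 - θ 2) * seqWeight φ θ (1 :: B ++ [1]) := by
    intro B
    rw [show (1 :: B ++ [1, 2] : List ℕ) = (1 :: B) ++ 1 :: [2] by simp, seqWeight_split,
      show seqWeight φ θ [1, 2] = φ (θ 1 - θ 2) by simp [seqWeight]]
    simp only [List.cons_append]
    ring
  refine ⟨fun B C => ⟨?_, ?_⟩, ?_⟩
  · rw [key1, mul_comm (φ (θ 1 - θ 2)), mul_div_assoc, div_self hφ, mul_one]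
  · rw [key2, mul_comm (φ (θ 1 - θ 2)), mul_div_assoc, div_self hφ, mul_one]
  intro n m hn hm
  set A := Multiset.replicate n 1 + Multiset.replicate m 2 with hA
  constructor
  · refine ⟨?_, ?_, ?_⟩
    · -- MapsTo
      rintro (⟨B, C⟩ | B) hx
      · obtain ⟨hmul, hC⟩ := hx
        refine ⟨hmul, by simp [glue], ?_⟩
        show (glue (.inl (B, C))).getLast? = some 2
        rw [show glue (.inl (B, C)) = (1 :: B ++ [1] ++ 2 :: C) ++ [2] by simp [glue],
          List.getLast?_concat]
      · refine ⟨hx, by simp [glue], ?_⟩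
        show (glue (.inr B)).getLast? = some 2
        rw [show glue (.inr B) = (1 :: B ++ [1]) ++ [2] by simp [glue], List.getLast?_concat]
    · -- InjOn
      rintro x hx y hy hxy
      have h : unglue (glue x) = unglue (glue y) := by rw [hxy]
      rcases x with ⟨B, C⟩ | B <;> rcases y with ⟨B', C'⟩ | B'
      · rwa [unglue_glue_inl B C hx.2, unglue_glue_inl B' C' hy.2] at h
      · rw [unglue_glue_inl B C hx.2, unglue_glue_inr B'] at h; exact absurd h (by simp)
      · rw [unglue_glue_inr B, unglue_glue_inl B' C' hy.2] at h; exact absurd h (by simp)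
      · rwa [unglue_glue_inr B, unglue_glue_inr B'] at h
    · -- SurjOn
      rintro l ⟨hl, hhead, hlast⟩
      have hmemA : ∀ x ∈ l, x = 1 ∨ x = 2 := by
        intro x hx
        have hxA : x ∈ A := by rw [← hl]; exact hx
        rw [hA] at hxA
        rcases Multiset.mem_add.1 hxA with h | h
        · left; exact Multiset.eq_of_mem_replicate h
        · right; exact Multiset.eq_of_mem_replicate h
      have hcount : 2 ≤ l.count 1 := by
        have hc : Multiset.count 1 (↑l) = n := by
          rw [hl, hA]; simp [Multiset.count_replicate]
        rw [Multiset.coe_count] at hc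
        omega
      rcases decomp l hhead hlast hmemA hcount with ⟨B, C, hBC, hC⟩ | ⟨B, hB⟩
      · refine ⟨.inl (B, C), ⟨?_, hC⟩, by simp only [glue]; exact hBC.symm⟩
        rw [← hBC, hl]
      · refine ⟨.inr B, ?_, by simp only [glue]; exact hB.symm⟩
        show ((1 :: B ++ [1, 2] : List ℕ) : Multiset ℕ) = A
        rw [← hB, hl]
  · rintro (⟨B, C⟩ | B) hx
    · exact key1 B C
    · exact key2 B
end
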